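/- Let λ be an ordinal and X ⊆ λ + 1. If X contains an uncountable closed discrete subset (in the subspace topology of the order topology on λ+1), then there exists ξ ≤ λ with cofinality ω₁ such that X ∩ ξ is unbounded in ξ, X ∩ ξ is not stationary in ξ, and ξ ∉ X. -/

import Mathlib

/-- `C` is a club (closed unbounded) subset of the ordinal `ξ`. -/
def IsClubIn (C : Set Ordinal) (ξ : Ordinal) : Prop :=
  C ⊆ Set.Iio ξ ∧ (∀ a < ξ, ∃ c ∈ C, a ≤ c) ∧
    (∀ a < ξ, (C ∩ Set.Iio a).Nonempty → sSup (C ∩ Set.Iio a) = a → a ∈ C)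

/-- `S` is stationary in the ordinal `ξ`. -/
def IsStationaryIn (S : Set Ordinal) (ξ : Ordinal) : Prop :=
  ∀ C : Set Ordinal, IsClubIn C ξ → (S ∩ C).Nonempty

open Ordinal Cardinal Set Order Topology Filter
theorem stmt2 (l : Ordinal) (X : Set Ordinal) (hX : X ⊆ Set.Iic l)
    (D : Set X) (hD : ¬ D.Countable) (hDcl : IsClosed D) (hDdisc : DiscreteTopology D) :
    ∃ ξ ≤ l, ξ.cof = Cardinal.aleph 1 ∧
      (∀ a < ξ, ∃ b ∈ X, b < ξ ∧ a < b) ∧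
      ¬ IsStationaryIn (X ∩ Set.Iio ξ) ξ ∧ ξ ∉ X := by
  classical
  set D' : Set Ordinal := Subtype.val '' D with hD'def
  have hD'X : D' ⊆ X := by rintro _ ⟨d, _, rfl⟩; exact d.2
  have hD'c : ¬ D'.Countable := by
    intro h
    exact hD (((h.preimage Subtype.val_injective)).mono (Set.subset_preimage_image _ _))
  -- key topological fact: no point of X is a limit from below of points of D'
  have key : ∀ a ∈ X, (D' ∩ Set.Iio a).Nonempty →
      (∀ b < a, ∃ e ∈ D', b < e ∧ e < a) → False := by
    intro a haX hne hlim
    set x : X := ⟨a, haX⟩ with hxdef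
    have hxnb : ∀ U ∈ 𝓝 x, ∃ d : X, d ∈ D ∧ d ∈ U ∧ (d : Ordinal) < a := by
      intro U hU
      rw [show (𝓝 x : Filter X) = comap Subtype.val (𝓝 a) from nhds_subtype_eq_comap] at hU
      obtain ⟨V, hV, hVU⟩ := hU
      obtain ⟨lo, hi, hmem, hsub⟩ :=
        (mem_nhds_iff_exists_Ioo_subset' ⟨hne.choose, hne.choose_spec.2⟩ (exists_gt a)).1 hV
      obtain ⟨e, heD', hlo, hea⟩ := hlim lo hmem.1
      obtain ⟨d, hdD, rfl⟩ := heD'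
      exact ⟨d, hdD, hVU (hsub ⟨hlo, hea.trans hmem.2⟩), hea⟩
    have hxD : x ∈ D := by
      rw [← hDcl.closure_eq, mem_closure_iff_nhds]
      intro U hU
      obtain ⟨d, hdD, hdU, _⟩ := hxnb U hU
      exact ⟨d, hdU, hdD⟩
    have hb : (𝓝 x ⊓ 𝓟 ({x}ᶜ ∩ D) : Filter X) = ⊥ := by
      have := discreteTopology_subtype_iff.mp hDdisc x hxD
      rwa [nhdsWithin, inf_assoc, inf_principal] at this
    rw [inf_principal_eq_bot] at hb
    obtain ⟨d, hdD, hdU, hda⟩ := hxnb _ hb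
    refine hdU ⟨?_, hdD⟩
    simp only [Set.mem_compl_iff, Set.mem_singleton_iff]
    intro h
    rw [h] at hda
    exact absurd hda (lt_irrefl _)
  -- enumeration
  set S : Set Ordinal := D' ∪ Set.Ici (l + 1) with hSdef
  have hSub : ¬ BddAbove S := by
    rintro ⟨b, hb⟩
    have h1 : max (l + 1) (b + 1) ∈ S := Or.inr (Set.mem_Ici.2 (le_max_left _ _))
    have := hb h1
    have h2 : b + 1 ≤ b := le_trans (le_max_right _ _) this
    exact absurd h2 (by simpa using (lt_succ b).not_ge)
  set g : Ordinal → Ordinal := enumOrd S with hgdef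
  have hg : StrictMono g := enumOrd_strictMono hSub
  set w1 : Ordinal := (Cardinal.aleph 1).ord with hw1def
  have hw1lim : IsSuccLimit w1 := Cardinal.isSuccLimit_ord (aleph0_le_aleph 1)
  have hgD' : ∀ α < w1, g α ∈ D' := by
    intro α hα
    rcases enumOrd_mem hSub α with h | h
    · exact h
    · exfalso
      have hsub : D' ⊆ g '' Set.Iio α := by
        intro d hd
        have hdl : d < l + 1 := lt_succ_iff.mpr (hX (hD'X hd))
        have hdS : d ∈ S := Or.inl hd
        obtain ⟨β, rfl⟩ : ∃ β, g β = d := by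
          have := range_enumOrd hSub
          exact (Set.ext_iff.1 this d).2 hdS
        exact ⟨β, hg.lt_iff_lt.1 (lt_of_lt_of_le hdl (le_trans h (le_refl _))), rfl⟩
      have hcnt : (Set.Iio α).Countable := by
        rw [← Cardinal.le_aleph0_iff_set_countable, Ordinal.mk_Iio_ordinal]
        have : α.card < Cardinal.aleph 1 := Cardinal.lt_ord.1 hα
        have h2 : α.card ≤ ℵ₀ := by
          rwa [← Cardinal.succ_aleph0, Order.lt_succ_iff] at this
        calc Cardinal.lift.{_} α.card ≤ Cardinal.lift ℵ₀ := Cardinal.lift_le.2 h2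
          _ = ℵ₀ := Cardinal.lift_aleph0
      exact hD'c ((hcnt.image g).mono hsub)
  set e : w1.ToType → Ordinal := fun i => g ((Ordinal.ToType.mk (o := w1)).symm i).1 with hedef
  set ξ : Ordinal := ⨆ i, e i with hξdef
  have hgξ : ∀ α < w1, g α < ξ := by
    intro α hα
    have hs : succ α < w1 := hw1lim.succ_lt hα
    have : g (succ α) ≤ ξ := by
      have := Ordinal.le_iSup e ((Ordinal.ToType.mk (o := w1)) ⟨succ α, hs⟩)
      simpa [hedef] using this
    exact lt_of_lt_of_le (hg (lt_succ α)) this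
  have hub : ∀ b < ξ, ∃ α < w1, b < g α := by
    intro b hb
    rw [hξdef, Ordinal.lt_iSup_iff] at hb
    obtain ⟨i, hi⟩ := hb
    exact ⟨((Ordinal.ToType.mk (o := w1)).symm i).1, ((Ordinal.ToType.mk (o := w1)).symm i).2, hi⟩
  have hξl : ξ ≤ l := Ordinal.iSup_le fun i => hX (hD'X (hgD' _ ((Ordinal.ToType.mk (o := w1)).symm i).2))
  -- cofinality
  have hcof_le : ξ.cof ≤ Cardinal.aleph 1 := by
    have h := Ordinal.cof_iSup_le (f := e) fun i => by
      exact hgξ _ ((Ordinal.ToType.mk (o := w1)).symm i).2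
    calc ξ.cof ≤ #w1.ToType := h
      _ = w1.card := Cardinal.mk_toType _
      _ = Cardinal.aleph 1 := Cardinal.card_ord _
  have hcof_gt : ℵ₀ < ξ.cof := by
    by_contra hc
    push_neg at hc
    obtain ⟨ι₀, f, hlsub, hcard⟩ := Ordinal.exists_lsub_cof ξ
    choose α hα hfα using fun i => hub (f i) (hlsub ▸ Ordinal.lt_lsub f i)
    have hβ : (⨆ i, α i) < w1 := by
      apply Ordinal.iSup_lt_ord _ hα
      rw [hcard, Cardinal.isRegular_aleph_one.cof_eq]
      exact lt_of_le_of_lt hc Cardinal.aleph0_lt_aleph_one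
    have hle : ξ ≤ g (⨆ i, α i) := by
      rw [← hlsub]
      exact Ordinal.lsub_le fun i => lt_of_lt_of_le (hfα i) (hg.monotone (Ordinal.le_iSup α i))
    exact absurd (lt_of_le_of_lt hle (hgξ _ hβ)) (lt_irrefl _)
  have hcof : ξ.cof = Cardinal.aleph 1 := by
    refine le_antisymm hcof_le ?_
    rw [← Cardinal.succ_aleph0]
    exact Order.succ_le_of_lt hcof_gt
  -- the club of limit points
  set E : Set Ordinal := g '' Set.Iio w1 with hEdef
  have hED' : E ⊆ D' := by rintro _ ⟨β, hβ, rfl⟩; exact hgD' β hβ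
  set C : Set Ordinal := {c | c < ξ ∧ (E ∩ Set.Iio c).Nonempty ∧ sSup (E ∩ Set.Iio c) = c}
    with hCdef
  have hbdd : ∀ c : Ordinal, BddAbove (E ∩ Set.Iio c) :=
    fun c => BddAbove.mono Set.inter_subset_right ⟨c, fun y hy => le_of_lt hy⟩
  have hClim : ∀ a ∈ C, ∀ b < a, ∃ e ∈ E, b < e ∧ e < a := by
    rintro a ⟨haξ, hne, hsup⟩ b hb
    by_contra hcon
    push_neg at hcon
    have : sSup (E ∩ Set.Iio a) ≤ b := by
      apply csSup_le hne
      rintro y ⟨hyE, hy⟩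
      by_contra hyb
      push_neg at hyb
      exact absurd hy ((hcon y hyE hyb).not_gt)
    rw [hsup] at this
    exact absurd hb this.not_gt
  have hCclub : IsClubIn C ξ := by
    refine ⟨fun c hc => hc.1, ?_, ?_⟩
    · -- unbounded
      intro a ha
      obtain ⟨α₀, hα₀, hagα₀⟩ := hub a ha
      have hωlt : (ω : Ordinal) < w1 := by
        rw [hw1def, ← Cardinal.ord_aleph0]
        exact Cardinal.ord_lt_ord.2 Cardinal.aleph0_lt_aleph_one
      have hα₀ω : α₀ + ω < w1 := Ordinal.isPrincipal_add_ord (aleph0_le_aleph 1) hα₀ hωlt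
      have hn : ∀ n : ℕ, α₀ + (n : Ordinal) < w1 :=
        fun n => lt_trans ((add_lt_add_iff_left α₀).2 (nat_lt_omega0 n)) hα₀ω
      set c : Ordinal := ⨆ n : ℕ, g (α₀ + (n : Ordinal)) with hcdef
      have hcle : c ≤ g (α₀ + ω) :=
        Ordinal.iSup_le fun n => (hg ((add_lt_add_iff_left α₀).2 (nat_lt_omega0 n))).le
      have hcξ : c < ξ := lt_of_le_of_lt hcle (hgξ _ hα₀ω)
      have hmemc : ∀ n : ℕ, g (α₀ + (n : Ordinal)) < c := by
        intro n
        have h1 : g (α₀ + (n : Ordinal)) < g (α₀ + ((n + 1 : ℕ) : Ordinal)) := by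
          apply hg
          apply (add_lt_add_iff_left α₀).2
          exact_mod_cast Nat.lt_succ_self n
        exact lt_of_lt_of_le h1 (Ordinal.le_iSup (fun n : ℕ => g (α₀ + (n : Ordinal))) (n + 1))
      have hcE : ∀ n : ℕ, g (α₀ + (n : Ordinal)) ∈ E ∩ Set.Iio c :=
        fun n => ⟨⟨_, Set.mem_Iio.2 (hn n), rfl⟩, Set.mem_Iio.2 (hmemc n)⟩
      have hsupc : sSup (E ∩ Set.Iio c) = c := by
        refine le_antisymm (csSup_le ⟨_, hcE 0⟩ fun y hy => le_of_lt (Set.mem_Iio.1 hy.2)) ?_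
        exact Ordinal.iSup_le fun n => le_csSup (hbdd c) (hcE n)
      have hcmem : c ∈ C := Set.mem_setOf_eq ▸ ⟨hcξ, ⟨_, hcE 0⟩, hsupc⟩
      refine ⟨c, hcmem, ?_⟩
      have : a < g (α₀ + ((0 : ℕ) : Ordinal)) := by simpa using hagα₀
      exact le_of_lt (lt_of_lt_of_le this (hmemc 0).le)
    · -- closed
      rintro a ha ⟨c, hcC, hca⟩ hsup
      have hca' : c < a := Set.mem_Iio.1 hca
      have hEa : (E ∩ Set.Iio a).Nonempty := by
        obtain ⟨y, hyE, hyc⟩ := hcC.2.1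
        exact ⟨y, hyE, Set.mem_Iio.2 (lt_trans (Set.mem_Iio.1 hyc) hca')⟩
      have hle : a ≤ sSup (E ∩ Set.Iio a) := by
        calc a = sSup (C ∩ Set.Iio a) := hsup.symm
          _ ≤ sSup (E ∩ Set.Iio a) := by
              refine csSup_le ⟨c, hcC, hca⟩ ?_
              rintro y ⟨hyC, hya⟩
              calc y = sSup (E ∩ Set.Iio y) := hyC.2.2.symm
                _ ≤ sSup (E ∩ Set.Iio a) := csSup_le_csSup (hbdd a) hyC.2.1
                    (Set.inter_subset_inter_right _
                      (Set.Iio_subset_Iio (le_of_lt (Set.mem_Iio.1 hya))))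
      exact Set.mem_setOf_eq ▸ ⟨ha, hEa,
        le_antisymm (csSup_le hEa fun y hy => le_of_lt (Set.mem_Iio.1 hy.2)) hle⟩
  refine ⟨ξ, hξl, hcof, ?_, ?_, ?_⟩
  · -- unbounded in X
    intro a ha
    obtain ⟨α, hα, hga⟩ := hub a ha
    exact ⟨g α, hD'X (hgD' α hα), hgξ α hα, hga⟩
  · -- not stationary
    intro hstat
    obtain ⟨a, ⟨⟨haX, haξ⟩, haC⟩⟩ := hstat C hCclub
    apply key a haX
    · obtain ⟨y, hyE, hya⟩ := haC.2.1
      exact ⟨y, hED' hyE, hya⟩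
    · intro b hb
      obtain ⟨y, hyE, hby, hya⟩ := hClim a haC b hb
      exact ⟨y, hED' hyE, hby, hya⟩
  · -- ξ ∉ X
    intro hξX
    apply key ξ hξX
    · exact ⟨g 0, hgD' 0 hw1lim.pos, hgξ 0 hw1lim.pos⟩
    · intro b hb
      obtain ⟨α, hα, hbg⟩ := hub b hb
      exact ⟨g α, hgD' α hα, hbg, hgξ α hα⟩
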